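/- Let b ≥ 2 be an integer, X a nonempty set of positive integers, J = {⌊log_b x⌋ : x ∈ X}, and j_0 = min J. Assume j_0 ≥ 1 and that there is a positive integer l_0 with l_0 ≥ j_0 such that every integer in [j_0, j_0 + l_0) belongs to J (so that ⌈j_0/l_0⌉ = 1). Then I_b(j_0, ∞) = {x : x ≥ b^{j_0}} is the smallest b-dc-semigroup containing X; that is, it is a b-dc-semigroup, it contains X, and it is contained in every b-dc-semigroup containing X. -/

import Mathlib

/-- A set `G` of positive integers is a `b`-dc-semigroup if it is closed under
multiplication and closed with respect to the number of base-`b` digits. -/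
def IsDCSemigroup (b : ℕ) (G : Set ℕ) : Prop :=
  (∀ x ∈ G, 0 < x) ∧
  (∀ x ∈ G, ∀ y ∈ G, x * y ∈ G) ∧
  (∀ x ∈ G, ∀ y : ℕ, 0 < y → Nat.log b y = Nat.log b x → y ∈ G)

theorem stmt_12 (b : ℕ) (hb : 2 ≤ b) (X : Set ℕ) (hXne : X.Nonempty)
    (hXpos : ∀ x ∈ X, 0 < x)
    (J : Set ℕ) (hJ : J = {n : ℕ | ∃ x ∈ X, Nat.log b x = n})
    (j₀ : ℕ) (hj₀mem : j₀ ∈ J) (hj₀min : ∀ n ∈ J, j₀ ≤ n) (hj₀ : 1 ≤ j₀)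
    (l₀ : ℕ) (hl₀pos : 0 < l₀) (hl₀ : j₀ ≤ l₀)
    (hfull : ∀ n : ℕ, j₀ ≤ n → n < j₀ + l₀ → n ∈ J) :
    IsDCSemigroup b {x : ℕ | b ^ j₀ ≤ x} ∧
    X ⊆ {x : ℕ | b ^ j₀ ≤ x} ∧
    ∀ H : Set ℕ, IsDCSemigroup b H → X ⊆ H → {x : ℕ | b ^ j₀ ≤ x} ⊆ H := by
  have hb1 : 1 < b := hb
  have hbpow : ∀ n : ℕ, 0 < b ^ n := fun n => Nat.pow_pos (n := n) (by omega)
  -- elements ≥ b^j₀ are positive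
  have hpos : ∀ x : ℕ, b ^ j₀ ≤ x → 0 < x := fun x hx => lt_of_lt_of_le (hbpow j₀) hx
  -- x ≥ b^j₀ ↔ log b x ≥ j₀ (for positive x)
  have hlog_ge : ∀ x : ℕ, b ^ j₀ ≤ x → j₀ ≤ Nat.log b x := by
    intro x hx
    have := hbpow j₀
    exact (Nat.le_log_iff_pow_le hb1 (by omega : x ≠ 0)).mpr hx
  have hge_of_log : ∀ x : ℕ, 0 < x → j₀ ≤ Nat.log b x → b ^ j₀ ≤ x := by
    intro x hx hlx
    exact (Nat.le_log_iff_pow_le hb1 (by omega : x ≠ 0)).mp hlx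
  -- X ⊆ {x | b^j₀ ≤ x}
  have hXsub : X ⊆ {x : ℕ | b ^ j₀ ≤ x} := by
    intro x hx
    have hxpos := hXpos x hx
    have : Nat.log b x ∈ J := by rw [hJ]; exact ⟨x, hx, rfl⟩
    exact hge_of_log x hxpos (hj₀min _ this)
  refine ⟨⟨fun x hx => hpos x hx, ?_, ?_⟩, hXsub, ?_⟩
  · intro x hx y hy
    calc b ^ j₀ ≤ x := hx
      _ = x * 1 := (mul_one x).symm
      _ ≤ x * y := Nat.mul_le_mul_left x (hpos y hy)
  · intro x hx y hy hlog
    exact hge_of_log y hy (hlog ▸ hlog_ge x hx)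
  · intro H hH hXH
    obtain ⟨hHpos, hHmul, hHdig⟩ := hH
    -- b^n ∈ H for all n ≥ j₀, by strong induction
    have key : ∀ n : ℕ, j₀ ≤ n → b ^ n ∈ H := by
      intro n
      induction n using Nat.strong_induction_on with
      | _ n ih =>
        intro hn
        by_cases hsmall : n < j₀ + l₀
        · have hmem := hfull n hn hsmall
          rw [hJ] at hmem
          obtain ⟨x, hxX, hxlog⟩ := hmem
          have : Nat.log b (b ^ n) = Nat.log b x := by
            rw [Nat.log_pow hb1, hxlog]
          exact hHdig x (hXH hxX) (b ^ n) (hbpow n) this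
        · push_neg at hsmall
          have h1 : b ^ j₀ ∈ H := ih j₀ (by omega) le_rfl
          have h2 : b ^ (n - j₀) ∈ H := ih (n - j₀) (by omega) (by omega)
          have : b ^ j₀ * b ^ (n - j₀) = b ^ n := by
            rw [← pow_add]; congr 1; omega
          exact this ▸ hHmul _ h1 _ h2
    intro x hx
    have hxpos := hpos x hx
    have hlx : j₀ ≤ Nat.log b x := hlog_ge x hx
    have hbn : b ^ Nat.log b x ∈ H := key _ hlx
    exact hHdig _ hbn x hxpos (by rw [Nat.log_pow hb1])
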